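/- The measure μ̂ with density 1/(u-v)² on Σ × Σ₀ is invariant under the natural extension F̂ of the octagon Farey map: the pushforward of μ̂ under F̂ equals μ̂, i.e. μ̂(F̂⁻¹(D)) = μ̂(D) for every Borel set D ⊆ ℝ². -/

import Mathlib

open MeasureTheory Set

noncomputable section

/-- The linear fractional transformation of `ℝ` induced by a 2×2 real matrix,
with the convention that the value is `0` when the denominator vanishes. -/
def mob (M : Matrix (Fin 2) (Fin 2) ℝ) (u : ℝ) : ℝ :=
  (M 0 0 * u + M 0 1) / (M 1 0 * u + M 1 1)

/-- The matrix `γ = [[-1, 2+2√2],[0,1]]`. -/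
def gam : Matrix (Fin 2) (Fin 2) ℝ := !![-1, 2 + 2 * Real.sqrt 2; 0, 1]

/-- The isometries `ν₁, …, ν₇` of the octagon. -/
def nu : ℕ → Matrix (Fin 2) (Fin 2) ℝ
  | 1 => (Real.sqrt 2)⁻¹ • !![1, 1; 1, -1]
  | 2 => (Real.sqrt 2)⁻¹ • !![1, 1; -1, 1]
  | 3 => !![0, 1; 1, 0]
  | 4 => !![0, 1; -1, 0]
  | 5 => (Real.sqrt 2)⁻¹ • !![-1, 1; 1, 1]
  | 6 => (Real.sqrt 2)⁻¹ • !![-1, 1; -1, -1]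
  | 7 => !![-1, 0; 0, 1]
  | _ => 1

/-- The index `i` of the sector `Σᵢ` (in inverse-slope coordinates) containing `u`:
`Σ₀ = (1+√2, ∞)`, `Σ₁ = (1, 1+√2]`, `Σ₂ = (√2-1, 1]`, `Σ₃ = (0, √2-1]`, `Σ₄ = (1-√2, 0]`,
`Σ₅ = (-1, 1-√2]`, `Σ₆ = (-1-√2, -1]`, `Σ₇ = (-∞, -1-√2]`. -/
def sectorIndex (u : ℝ) : ℕ :=
  if 1 + Real.sqrt 2 < u then 0
  else if 1 < u then 1
  else if Real.sqrt 2 - 1 < u then 2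
  else if 0 < u then 3
  else if 1 - Real.sqrt 2 < u then 4
  else if -1 < u then 5
  else if -(1 + Real.sqrt 2) < u then 6
  else 7

/-- The octagon Farey map in inverse-slope coordinates: `F(u) = (γ·νᵢ)[u]` for `u ∈ Σᵢ`
(`i = 1,…,7`), and `F(u) = u` for `u ∈ Σ₀`. -/
def F (u : ℝ) : ℝ :=
  if sectorIndex u = 0 then u else mob (gam * nu (sectorIndex u)) u

/-- The natural extension of the octagon Farey map:
`F̂(u,v) = ((γ·νᵢ)[u], (γ·νᵢ)[v])` for `u ∈ Σᵢ` (`i = 1,…,7`), and `F̂(u,v) = (u,v)`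
for `u ∈ Σ₀`. -/
def Fhat (p : ℝ × ℝ) : ℝ × ℝ :=
  if sectorIndex p.1 = 0 then p
  else (mob (gam * nu (sectorIndex p.1)) p.1, mob (gam * nu (sectorIndex p.1)) p.2)

/-- The measure with density `1/(u-v)²` on `Σ × Σ₀ = (-∞, 1+√2) × (1+√2, ∞)`
and `0` elsewhere. -/
def fareyMeasureHat : Measure (ℝ × ℝ) :=
  volume.withDensity
    ((Set.Iio (1 + Real.sqrt 2) ×ˢ Set.Ioi (1 + Real.sqrt 2)).indicator
      fun p => ENNReal.ofReal ((p.1 - p.2) ^ 2)⁻¹)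


open scoped ENNReal

lemma s2_sq : Real.sqrt 2 ^ 2 = 2 := Real.sq_sqrt (by norm_num)
lemma s2_gt1 : 1 < Real.sqrt 2 := by nlinarith [s2_sq, Real.sqrt_nonneg 2]
lemma s2_lt : Real.sqrt 2 < 3/2 := by nlinarith [s2_sq, Real.sqrt_nonneg 2]
lemma s2_pos : (0:ℝ) < Real.sqrt 2 := by linarith [s2_gt1]

def oK : ℝ := 1 + Real.sqrt 2

lemma mob_smul (r : ℝ) (hr : r ≠ 0) (M : Matrix (Fin 2) (Fin 2) ℝ) (u : ℝ) :
    mob (r • M) u = mob M u := by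
  simp only [mob, Matrix.smul_apply, smul_eq_mul]
  rw [show r * M 0 0 * u + r * M 0 1 = r * (M 0 0 * u + M 0 1) by ring,
      show r * M 1 0 * u + r * M 1 1 = r * (M 1 0 * u + M 1 1) by ring,
      mul_div_mul_left _ _ hr]

lemma mob1 (u : ℝ) : mob (gam * nu 1) u
    = ((1+2*Real.sqrt 2) * u + (-(3+2*Real.sqrt 2))) / (1*u + (-1)) := by
  have : gam * nu 1 = (Real.sqrt 2)⁻¹ •
      !![1 + 2*Real.sqrt 2, -(3 + 2*Real.sqrt 2); 1, -1] := by
    simp only [nu, gam, Matrix.mul_smul, Matrix.mul_fin_two]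
    norm_num
    try ring_nf
    try exact ⟨trivial, trivial⟩
  rw [this, mob_smul _ (inv_ne_zero s2_pos.ne'), mob]
  norm_num [Matrix.cons_val_zero, Matrix.cons_val_one]
  try ring_nf

lemma mob2 (u : ℝ) : mob (gam * nu 2) u
    = ((-(3+2*Real.sqrt 2)) * u + (1+2*Real.sqrt 2)) / ((-1)*u + 1) := by
  have : gam * nu 2 = (Real.sqrt 2)⁻¹ •
      !![-(3 + 2*Real.sqrt 2), 1 + 2*Real.sqrt 2; -1, 1] := by
    simp only [nu, gam, Matrix.mul_smul, Matrix.mul_fin_two]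
    norm_num; try ring_nf
    try exact ⟨trivial, trivial⟩
  rw [this, mob_smul _ (inv_ne_zero s2_pos.ne'), mob]
  norm_num [Matrix.cons_val_zero, Matrix.cons_val_one]
  try ring_nf

lemma mob3 (u : ℝ) : mob (gam * nu 3) u = ((2+2*Real.sqrt 2) * u + (-1)) / (1*u + 0) := by
  have : gam * nu 3 = !![2 + 2*Real.sqrt 2, -1; 1, 0] := by
    simp only [nu, gam, Matrix.mul_fin_two]; norm_num
  rw [this, mob]; norm_num [Matrix.cons_val_zero, Matrix.cons_val_one]

lemma mob4 (u : ℝ) : mob (gam * nu 4) u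
    = ((-(2+2*Real.sqrt 2)) * u + (-1)) / ((-1)*u + 0) := by
  have : gam * nu 4 = !![-(2 + 2*Real.sqrt 2), -1; -1, 0] := by
    simp only [nu, gam, Matrix.mul_fin_two]; norm_num
  rw [this, mob]; norm_num [Matrix.cons_val_zero, Matrix.cons_val_one]; try ring_nf

lemma mob5 (u : ℝ) : mob (gam * nu 5) u
    = ((3+2*Real.sqrt 2) * u + (1+2*Real.sqrt 2)) / (1*u + 1) := by
  have : gam * nu 5 = (Real.sqrt 2)⁻¹ •
      !![3 + 2*Real.sqrt 2, 1 + 2*Real.sqrt 2; 1, 1] := by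
    simp only [nu, gam, Matrix.mul_smul, Matrix.mul_fin_two]
    norm_num; try ring_nf
    try exact ⟨trivial, trivial⟩
  rw [this, mob_smul _ (inv_ne_zero s2_pos.ne'), mob]
  norm_num [Matrix.cons_val_zero, Matrix.cons_val_one]

lemma mob6 (u : ℝ) : mob (gam * nu 6) u
    = ((-(1+2*Real.sqrt 2)) * u + (-(3+2*Real.sqrt 2))) / ((-1)*u + (-1)) := by
  have : gam * nu 6 = (Real.sqrt 2)⁻¹ •
      !![-(1 + 2*Real.sqrt 2), -(3 + 2*Real.sqrt 2); -1, -1] := by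
    simp only [nu, gam, Matrix.mul_smul, Matrix.mul_fin_two]
    norm_num; try ring_nf
    try exact ⟨trivial, trivial⟩
  rw [this, mob_smul _ (inv_ne_zero s2_pos.ne'), mob]
  norm_num [Matrix.cons_val_zero, Matrix.cons_val_one]
  try ring_nf

lemma mob7 (u : ℝ) : mob (gam * nu 7) u = (1 * u + (2 + 2*Real.sqrt 2)) / (0 * u + 1) := by
  have : gam * nu 7 = !![1, 2 + 2*Real.sqrt 2; 0, 1] := by
    simp only [nu, gam, Matrix.mul_fin_two]; norm_num
  rw [this, mob]; norm_num [Matrix.cons_val_zero, Matrix.cons_val_one]; try ring_nf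

lemma lint_image {s : Set ℝ} {f f' : ℝ → ℝ} (hs : MeasurableSet s)
    (hf' : ∀ x ∈ s, HasDerivWithinAt f (f' x) s x) (hf : InjOn f s) (g : ℝ → ℝ≥0∞) :
    ∫⁻ x in (f '' s), g x = ∫⁻ x in s, ENNReal.ofReal |f' x| * g (f x) := by
  simpa only [ContinuousLinearMap.det_toSpanSingleton] using
    lintegral_image_eq_lintegral_abs_det_fderiv_mul volume hs
      (fun x hx => (hf' x hx).hasFDerivWithinAt) hf g

section abcd
variable {a b c d u v : ℝ}

lemma mob_hasDeriv (hden : c * u + d ≠ 0) :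
    HasDerivAt (fun u => (a*u+b)/(c*u+d)) ((a*d - b*c)/(c*u+d)^2) u := by
  have h1 : HasDerivAt (fun u : ℝ => a*u+b) a u := by
    simpa using ((hasDerivAt_id u).const_mul a).add_const b
  have h2 : HasDerivAt (fun u : ℝ => c*u+d) c u := by
    simpa using ((hasDerivAt_id u).const_mul c).add_const d
  have := h1.div h2 hden
  exact this.congr_deriv (by ring)

lemma mob_injOn (hδ : a*d - b*c ≠ 0) {s : Set ℝ} (hden : ∀ u ∈ s, c * u + d ≠ 0) :
    InjOn (fun u => (a*u+b)/(c*u+d)) s := by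
  intro u hu v hv h
  simp only at h
  rw [div_eq_div_iff (hden u hu) (hden v hv)] at h
  have : (a*d - b*c) * (u - v) = 0 := by ring_nf; ring_nf at h; linarith
  rcases mul_eq_zero.1 this with h' | h'
  · exact absurd h' hδ
  · linarith

lemma mob_inv (hδ : a*d - b*c ≠ 0) {y : ℝ} (hden : a - c*y ≠ 0) :
    (a * ((d*y-b)/(a-c*y)) + b) / (c * ((d*y-b)/(a-c*y)) + d) = y := by
  have h1 : a * ((d*y-b)/(a-c*y)) + b = (a*d-b*c)*y/(a-c*y) := by
    rw [mul_div_assoc', div_add' _ _ _ hden]; ring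
  have h2 : c * ((d*y-b)/(a-c*y)) + d = (a*d-b*c)/(a-c*y) := by
    field_simp; ring
  rw [h1, h2, div_div_div_cancel_right₀ hden, mul_div_cancel_left₀ _ hδ]

lemma mob_sub (hu : c*u+d ≠ 0) (hv : c*v+d ≠ 0) :
    (a*u+b)/(c*u+d) - (a*v+b)/(c*v+d) = ((a*d-b*c)*(u-v))/((c*u+d)*(c*v+d)) := by
  rw [div_sub_div _ _ hu hv]; ring

end abcd

lemma image_eq {f : ℝ → ℝ} {S T : Set ℝ} (h1 : ∀ u ∈ S, f u ∈ T)
    (h2 : ∀ y ∈ T, ∃ u ∈ S, f u = y) : f '' S = T := by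
  apply Subset.antisymm
  · rintro _ ⟨u, hu, rfl⟩; exact h1 u hu
  · intro y hy; rcases h2 y hy with ⟨u, hu, h⟩; exact ⟨u, hu, h⟩

lemma image_abcd (a b c d : ℝ) (hδ : a*d-b*c ≠ 0) {S T : Set ℝ}
    (h1 : ∀ u ∈ S, (a*u+b)/(c*u+d) ∈ T)
    (hden : ∀ y ∈ T, a - c*y ≠ 0)
    (h2 : ∀ y ∈ T, (d*y-b)/(a-c*y) ∈ S) :
    (fun u => (a*u+b)/(c*u+d)) '' S = T :=
  image_eq h1 (fun y hy => ⟨_, h2 y hy, mob_inv hδ (hden y hy)⟩)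

lemma piece_cov (a b c d : ℝ) (hδ : a*d - b*c ≠ 0)
    {I J : Set ℝ} (hI : MeasurableSet I) (hIK : I ⊆ Iio oK)
    (hJK : J ⊆ Ioi oK)
    (hIden : ∀ u ∈ I, c*u+d ≠ 0) (hVden : ∀ v ∈ Ioi oK, c*v+d ≠ 0)
    (himgI : (fun u => (a*u+b)/(c*u+d)) '' I = Iio oK)
    (himgJ : (fun u => (a*u+b)/(c*u+d)) '' (Ioi oK) = J)
    (φ : ℝ × ℝ → ℝ≥0∞) (hφ : Measurable φ) :
    ∫⁻ p in I ×ˢ Ioi oK, φ ((a*p.1+b)/(c*p.1+d), (a*p.2+b)/(c*p.2+d)) *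
      ENNReal.ofReal (((p.1-p.2)^2)⁻¹)
    = ∫⁻ p in (Iio oK) ×ˢ J, φ p * ENNReal.ofReal (((p.1-p.2)^2)⁻¹) := by
  set f : ℝ → ℝ := fun u => (a*u+b)/(c*u+d) with hf_def
  have hfm : Measurable f := by
    apply Measurable.div <;> fun_prop
  have hf'I : ∀ x ∈ I, HasDerivWithinAt f ((a*d-b*c)/(c*x+d)^2) I x :=
    fun x hx => (mob_hasDeriv (hIden x hx)).hasDerivWithinAt
  have hf'J : ∀ x ∈ Ioi oK, HasDerivWithinAt f ((a*d-b*c)/(c*x+d)^2) (Ioi oK) x :=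
    fun x hx => (mob_hasDeriv (hVden x hx)).hasDerivWithinAt
  have hinjI : InjOn f I := mob_injOn hδ hIden
  have hinjJ : InjOn f (Ioi oK) := mob_injOn hδ hVden
  set G : ℝ × ℝ → ℝ≥0∞ := fun q =>
    φ (q.1, f q.2) * ENNReal.ofReal (|a*d-b*c| / ((c*q.2+d)^2 * (q.1 - f q.2)^2))
    with hG_def
  have hGm : Measurable G := by
    apply Measurable.mul
    · exact hφ.comp (measurable_fst.prodMk (hfm.comp measurable_snd))
    · apply ENNReal.measurable_ofReal.comp
      apply Measurable.div
      · fun_prop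
      · apply Measurable.mul
        · fun_prop
        · apply Measurable.pow _ measurable_const
          exact measurable_fst.sub (hfm.comp measurable_snd)
  have claim1 : ∀ v ∈ Ioi oK,
      (∫⁻ u in I, φ (f u, f v) * ENNReal.ofReal (((u-v)^2)⁻¹))
        = ∫⁻ x in Iio oK, G (x, v) := by
    intro v hv
    have hvd := hVden v hv
    rw [← himgI, lint_image hI hf'I hinjI (fun x => G (x, v))]
    apply setLIntegral_congr_fun hI
    intro u hu
    have hud := hIden u hu
    have huv : u - v ≠ 0 := by
      have h1 : u < oK := hIK hu
      have h2 : oK < v := hv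
      intro h; rw [sub_eq_zero] at h; subst h; linarith
    have hsub : f u - f v = ((a*d-b*c)*(u-v))/((c*u+d)*(c*v+d)) := mob_sub hud hvd
    have hfufv : f u - f v ≠ 0 := by
      rw [hsub]
      exact div_ne_zero (mul_ne_zero hδ huv) (mul_ne_zero hud hvd)
    simp only [hG_def]
    rw [← mul_assoc, mul_comm (ENNReal.ofReal _) (φ _), mul_assoc]
    congr 1
    rw [← ENNReal.ofReal_mul (abs_nonneg _)]
    congr 1
    rw [abs_div, abs_of_nonneg (sq_nonneg (c*u+d)), hsub]
    rw [div_pow, mul_pow]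
    have h1 : |a*d-b*c| ^ 2 = (a*d-b*c)^2 := sq_abs _
    have hδa : |a*d-b*c| ≠ 0 := abs_ne_zero.mpr hδ
    rw [← h1]
    field_simp
    rw [div_self (mul_ne_zero (by rwa [mul_comm]) (by rwa [mul_comm]))]
  have claim2 : ∀ x : ℝ,
      (∫⁻ v in Ioi oK, G (x, v))
        = ∫⁻ y in J, φ (x, y) * ENNReal.ofReal (((x-y)^2)⁻¹) := by
    intro x
    rw [← himgJ, lint_image measurableSet_Ioi hf'J hinjJ
      (fun y => φ (x, y) * ENNReal.ofReal (((x-y)^2)⁻¹))]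
    apply setLIntegral_congr_fun measurableSet_Ioi
    intro v hv
    have hvd := hVden v hv
    simp only [hG_def]
    rw [← mul_assoc, mul_comm (ENNReal.ofReal _) (φ _), mul_assoc]
    congr 1
    rw [← ENNReal.ofReal_mul (abs_nonneg _)]
    congr 1
    rw [abs_div, abs_of_nonneg (sq_nonneg (c*v+d)), ← div_div, div_eq_mul_inv]
  have hrestr : ∀ (A : Set ℝ) (B : Set ℝ),
      (volume : Measure (ℝ × ℝ)).restrict (A ×ˢ B)
        = (volume.restrict A).prod (volume.restrict B) := by
    intro A B
    rw [MeasureTheory.Measure.volume_eq_prod]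
    exact (Measure.prod_restrict _ _).symm
  have hΨm : Measurable (fun p : ℝ × ℝ =>
      φ (f p.1, f p.2) * ENNReal.ofReal (((p.1-p.2)^2)⁻¹)) := by
    apply Measurable.mul
    · exact hφ.comp ((hfm.comp measurable_fst).prodMk (hfm.comp measurable_snd))
    · apply ENNReal.measurable_ofReal.comp
      fun_prop
  have hHm : Measurable (fun p : ℝ × ℝ => φ p * ENNReal.ofReal (((p.1-p.2)^2)⁻¹)) := by
    apply Measurable.mul hφ
    apply ENNReal.measurable_ofReal.comp; fun_prop
  calc
    ∫⁻ p in I ×ˢ Ioi oK, φ (f p.1, f p.2) * ENNReal.ofReal (((p.1-p.2)^2)⁻¹)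
        = ∫⁻ p, φ (f p.1, f p.2) * ENNReal.ofReal (((p.1-p.2)^2)⁻¹)
            ∂((volume.restrict I).prod (volume.restrict (Ioi oK))) := by rw [hrestr]
    _ = ∫⁻ v, ∫⁻ u, φ (f u, f v) * ENNReal.ofReal (((u-v)^2)⁻¹)
          ∂(volume.restrict I) ∂(volume.restrict (Ioi oK)) :=
        lintegral_prod_symm _ hΨm.aemeasurable
    _ = ∫⁻ v, ∫⁻ x, G (x, v) ∂(volume.restrict (Iio oK)) ∂(volume.restrict (Ioi oK)) := by
        apply lintegral_congr_ae
        filter_upwards [ae_restrict_mem measurableSet_Ioi] with v hv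
        exact claim1 v hv
    _ = ∫⁻ p, G p ∂((volume.restrict (Iio oK)).prod (volume.restrict (Ioi oK))) :=
        (lintegral_prod_symm _ hGm.aemeasurable).symm
    _ = ∫⁻ x, ∫⁻ v, G (x, v) ∂(volume.restrict (Ioi oK)) ∂(volume.restrict (Iio oK)) :=
        lintegral_prod _ hGm.aemeasurable
    _ = ∫⁻ x, ∫⁻ y, φ (x, y) * ENNReal.ofReal (((x-y)^2)⁻¹)
          ∂(volume.restrict J) ∂(volume.restrict (Iio oK)) :=
        lintegral_congr fun x => claim2 x
    _ = ∫⁻ p, φ p * ENNReal.ofReal (((p.1-p.2)^2)⁻¹)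
          ∂((volume.restrict (Iio oK)).prod (volume.restrict J)) :=
        (lintegral_prod _ hHm.aemeasurable).symm
    _ = _ := by rw [hrestr]

lemma pieceCov1 (φ : ℝ × ℝ → ℝ≥0∞) (hφ : Measurable φ) :
    ∫⁻ p in (Ioo 1 oK) ×ˢ Ioi oK,
        φ (mob (gam * nu 1) p.1, mob (gam * nu 1) p.2) *
          ENNReal.ofReal (((p.1-p.2)^2)⁻¹)
    = ∫⁻ p in (Iio oK) ×ˢ (Ioo oK (1+2*Real.sqrt 2)), φ p * ENNReal.ofReal (((p.1-p.2)^2)⁻¹) := by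
  have hδ : (1+2*Real.sqrt 2)*(-1) - (-(3+2*Real.sqrt 2))*1 ≠ 0 := by nlinarith [s2_sq, s2_gt1, s2_lt]
  simp only [mob1]
  refine piece_cov (1+2*Real.sqrt 2) (-(3+2*Real.sqrt 2)) 1 (-1) hδ measurableSet_Ioo ?_ ?_ ?_ ?_ ?_ ?_ φ hφ
  · -- I ⊆ Iio oK
    intro u hu; simp only [mem_Ioo, mem_Iio, oK] at hu ⊢; nlinarith [s2_sq, s2_gt1, s2_lt]
  · -- J ⊆ Ioi oK
    intro y hy; simp only [mem_Ioo, mem_Ioi, oK] at hy ⊢; nlinarith [s2_sq, s2_gt1, s2_lt]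
  · -- den on I
    intro u hu; simp only [mem_Ioo, oK] at hu; intro h; nlinarith [s2_sq, s2_gt1, s2_lt]
  · -- den on Ioi oK
    intro v hv; simp only [mem_Ioi, oK] at hv; intro h; nlinarith [s2_sq, s2_gt1, s2_lt]
  · -- image of I
    refine image_abcd (1+2*Real.sqrt 2) (-(3+2*Real.sqrt 2)) 1 (-1) hδ ?_ ?_ ?_
    · intro u hu; simp only [mem_Ioo, mem_Iio, oK] at hu ⊢
      rw [div_lt_iff₀ (by nlinarith [s2_sq, s2_gt1, s2_lt])]
      nlinarith [s2_sq, s2_gt1, s2_lt]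
    · intro y hy; simp only [mem_Iio, oK] at hy; intro h; nlinarith [s2_sq, s2_gt1, s2_lt]
    · intro y hy; simp only [mem_Iio, mem_Ioo, oK] at hy ⊢
      constructor
      · rw [lt_div_iff₀ (by nlinarith [s2_sq, s2_gt1, s2_lt])]
        nlinarith [s2_sq, s2_gt1, s2_lt]
      · rw [div_lt_iff₀ (by nlinarith [s2_sq, s2_gt1, s2_lt])]
        nlinarith [s2_sq, s2_gt1, s2_lt]
  · -- image of Ioi oK
    refine image_abcd (1+2*Real.sqrt 2) (-(3+2*Real.sqrt 2)) 1 (-1) hδ ?_ ?_ ?_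
    · intro u hu; simp only [mem_Ioi, mem_Ioo, oK] at hu ⊢
      constructor
      · rw [lt_div_iff₀ (by nlinarith [s2_sq, s2_gt1, s2_lt])]
        nlinarith [s2_sq, s2_gt1, s2_lt]
      · rw [div_lt_iff₀ (by nlinarith [s2_sq, s2_gt1, s2_lt])]
        nlinarith [s2_sq, s2_gt1, s2_lt]
    · intro y hy; simp only [mem_Ioo, oK] at hy; intro h; nlinarith [s2_sq, s2_gt1, s2_lt]
    · intro y hy; simp only [mem_Ioo, mem_Ioi, oK] at hy ⊢
      rw [lt_div_iff₀ (by nlinarith [s2_sq, s2_gt1, s2_lt])]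
      nlinarith [s2_sq, s2_gt1, s2_lt]


lemma pieceCov2 (φ : ℝ × ℝ → ℝ≥0∞) (hφ : Measurable φ) :
    ∫⁻ p in (Ioo (Real.sqrt 2-1) 1) ×ˢ Ioi oK,
        φ (mob (gam * nu 2) p.1, mob (gam * nu 2) p.2) *
          ENNReal.ofReal (((p.1-p.2)^2)⁻¹)
    = ∫⁻ p in (Iio oK) ×ˢ (Ioo (3+2*Real.sqrt 2) (3+3*Real.sqrt 2)), φ p * ENNReal.ofReal (((p.1-p.2)^2)⁻¹) := by
  have hδ : (-(3+2*Real.sqrt 2))*1 - (1+2*Real.sqrt 2)*(-1) ≠ 0 := by nlinarith [s2_sq, s2_gt1, s2_lt]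
  simp only [mob2]
  refine piece_cov (-(3+2*Real.sqrt 2)) (1+2*Real.sqrt 2) (-1) 1 hδ measurableSet_Ioo ?_ ?_ ?_ ?_ ?_ ?_ φ hφ
  · -- I ⊆ Iio oK
    intro u hu; simp only [mem_Ioo, mem_Iio, oK] at hu ⊢; nlinarith [s2_sq, s2_gt1, s2_lt]
  · -- J ⊆ Ioi oK
    intro y hy; simp only [mem_Ioo, mem_Ioi, oK] at hy ⊢; nlinarith [s2_sq, s2_gt1, s2_lt]
  · -- den on I
    intro u hu; simp only [mem_Ioo, oK] at hu; intro h; nlinarith [s2_sq, s2_gt1, s2_lt]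
  · -- den on Ioi oK
    intro v hv; simp only [mem_Ioi, oK] at hv; intro h; nlinarith [s2_sq, s2_gt1, s2_lt]
  · -- image of I
    refine image_abcd (-(3+2*Real.sqrt 2)) (1+2*Real.sqrt 2) (-1) 1 hδ ?_ ?_ ?_
    · intro u hu; simp only [mem_Ioo, mem_Iio, oK] at hu ⊢
      rw [div_lt_iff₀ (by nlinarith [s2_sq, s2_gt1, s2_lt])]
      nlinarith [s2_sq, s2_gt1, s2_lt]
    · intro y hy; simp only [mem_Iio, oK] at hy; intro h; nlinarith [s2_sq, s2_gt1, s2_lt]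
    · intro y hy; simp only [mem_Iio, mem_Ioo, oK] at hy ⊢
      constructor
      · rw [lt_div_iff_of_neg (by nlinarith [s2_sq, s2_gt1, s2_lt])]
        nlinarith [s2_sq, s2_gt1, s2_lt]
      · rw [div_lt_iff_of_neg (by nlinarith [s2_sq, s2_gt1, s2_lt])]
        nlinarith [s2_sq, s2_gt1, s2_lt]
  · -- image of Ioi oK
    refine image_abcd (-(3+2*Real.sqrt 2)) (1+2*Real.sqrt 2) (-1) 1 hδ ?_ ?_ ?_
    · intro u hu; simp only [mem_Ioi, mem_Ioo, oK] at hu ⊢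
      constructor
      · rw [lt_div_iff_of_neg (by nlinarith [s2_sq, s2_gt1, s2_lt])]
        nlinarith [s2_sq, s2_gt1, s2_lt]
      · rw [div_lt_iff_of_neg (by nlinarith [s2_sq, s2_gt1, s2_lt])]
        nlinarith [s2_sq, s2_gt1, s2_lt]
    · intro y hy; simp only [mem_Ioo, oK] at hy; intro h; nlinarith [s2_sq, s2_gt1, s2_lt]
    · intro y hy; simp only [mem_Ioo, mem_Ioi, oK] at hy ⊢
      rw [lt_div_iff₀ (by nlinarith [s2_sq, s2_gt1, s2_lt])]
      nlinarith [s2_sq, s2_gt1, s2_lt]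


lemma pieceCov3 (φ : ℝ × ℝ → ℝ≥0∞) (hφ : Measurable φ) :
    ∫⁻ p in (Ioo 0 (Real.sqrt 2-1)) ×ˢ Ioi oK,
        φ (mob (gam * nu 3) p.1, mob (gam * nu 3) p.2) *
          ENNReal.ofReal (((p.1-p.2)^2)⁻¹)
    = ∫⁻ p in (Iio oK) ×ˢ (Ioo (3+Real.sqrt 2) (2+2*Real.sqrt 2)), φ p * ENNReal.ofReal (((p.1-p.2)^2)⁻¹) := by
  have hδ : (2+2*Real.sqrt 2)*0 - (-1)*1 ≠ 0 := by nlinarith [s2_sq, s2_gt1, s2_lt]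
  simp only [mob3]
  refine piece_cov (2+2*Real.sqrt 2) (-1) 1 0 hδ measurableSet_Ioo ?_ ?_ ?_ ?_ ?_ ?_ φ hφ
  · -- I ⊆ Iio oK
    intro u hu; simp only [mem_Ioo, mem_Iio, oK] at hu ⊢; nlinarith [s2_sq, s2_gt1, s2_lt]
  · -- J ⊆ Ioi oK
    intro y hy; simp only [mem_Ioo, mem_Ioi, oK] at hy ⊢; nlinarith [s2_sq, s2_gt1, s2_lt]
  · -- den on I
    intro u hu; simp only [mem_Ioo, oK] at hu; intro h; nlinarith [s2_sq, s2_gt1, s2_lt]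
  · -- den on Ioi oK
    intro v hv; simp only [mem_Ioi, oK] at hv; intro h; nlinarith [s2_sq, s2_gt1, s2_lt]
  · -- image of I
    refine image_abcd (2+2*Real.sqrt 2) (-1) 1 0 hδ ?_ ?_ ?_
    · intro u hu; simp only [mem_Ioo, mem_Iio, oK] at hu ⊢
      rw [div_lt_iff₀ (by nlinarith [s2_sq, s2_gt1, s2_lt])]
      nlinarith [s2_sq, s2_gt1, s2_lt]
    · intro y hy; simp only [mem_Iio, oK] at hy; intro h; nlinarith [s2_sq, s2_gt1, s2_lt]
    · intro y hy; simp only [mem_Iio, mem_Ioo, oK] at hy ⊢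
      constructor
      · rw [lt_div_iff₀ (by nlinarith [s2_sq, s2_gt1, s2_lt])]
        nlinarith [s2_sq, s2_gt1, s2_lt]
      · rw [div_lt_iff₀ (by nlinarith [s2_sq, s2_gt1, s2_lt])]
        nlinarith [s2_sq, s2_gt1, s2_lt]
  · -- image of Ioi oK
    refine image_abcd (2+2*Real.sqrt 2) (-1) 1 0 hδ ?_ ?_ ?_
    · intro u hu; simp only [mem_Ioi, mem_Ioo, oK] at hu ⊢
      constructor
      · rw [lt_div_iff₀ (by nlinarith [s2_sq, s2_gt1, s2_lt])]
        nlinarith [s2_sq, s2_gt1, s2_lt]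
      · rw [div_lt_iff₀ (by nlinarith [s2_sq, s2_gt1, s2_lt])]
        nlinarith [s2_sq, s2_gt1, s2_lt]
    · intro y hy; simp only [mem_Ioo, oK] at hy; intro h; nlinarith [s2_sq, s2_gt1, s2_lt]
    · intro y hy; simp only [mem_Ioo, mem_Ioi, oK] at hy ⊢
      rw [lt_div_iff₀ (by nlinarith [s2_sq, s2_gt1, s2_lt])]
      nlinarith [s2_sq, s2_gt1, s2_lt]


lemma pieceCov4 (φ : ℝ × ℝ → ℝ≥0∞) (hφ : Measurable φ) :
    ∫⁻ p in (Ioo (1-Real.sqrt 2) 0) ×ˢ Ioi oK,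
        φ (mob (gam * nu 4) p.1, mob (gam * nu 4) p.2) *
          ENNReal.ofReal (((p.1-p.2)^2)⁻¹)
    = ∫⁻ p in (Iio oK) ×ˢ (Ioo (2+2*Real.sqrt 2) (1+3*Real.sqrt 2)), φ p * ENNReal.ofReal (((p.1-p.2)^2)⁻¹) := by
  have hδ : (-(2+2*Real.sqrt 2))*0 - (-1)*(-1) ≠ 0 := by nlinarith [s2_sq, s2_gt1, s2_lt]
  simp only [mob4]
  refine piece_cov (-(2+2*Real.sqrt 2)) (-1) (-1) 0 hδ measurableSet_Ioo ?_ ?_ ?_ ?_ ?_ ?_ φ hφ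
  · -- I ⊆ Iio oK
    intro u hu; simp only [mem_Ioo, mem_Iio, oK] at hu ⊢; nlinarith [s2_sq, s2_gt1, s2_lt]
  · -- J ⊆ Ioi oK
    intro y hy; simp only [mem_Ioo, mem_Ioi, oK] at hy ⊢; nlinarith [s2_sq, s2_gt1, s2_lt]
  · -- den on I
    intro u hu; simp only [mem_Ioo, oK] at hu; intro h; nlinarith [s2_sq, s2_gt1, s2_lt]
  · -- den on Ioi oK
    intro v hv; simp only [mem_Ioi, oK] at hv; intro h; nlinarith [s2_sq, s2_gt1, s2_lt]
  · -- image of I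
    refine image_abcd (-(2+2*Real.sqrt 2)) (-1) (-1) 0 hδ ?_ ?_ ?_
    · intro u hu; simp only [mem_Ioo, mem_Iio, oK] at hu ⊢
      rw [div_lt_iff₀ (by nlinarith [s2_sq, s2_gt1, s2_lt])]
      nlinarith [s2_sq, s2_gt1, s2_lt]
    · intro y hy; simp only [mem_Iio, oK] at hy; intro h; nlinarith [s2_sq, s2_gt1, s2_lt]
    · intro y hy; simp only [mem_Iio, mem_Ioo, oK] at hy ⊢
      constructor
      · rw [lt_div_iff_of_neg (by nlinarith [s2_sq, s2_gt1, s2_lt])]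
        nlinarith [s2_sq, s2_gt1, s2_lt]
      · rw [div_lt_iff_of_neg (by nlinarith [s2_sq, s2_gt1, s2_lt])]
        nlinarith [s2_sq, s2_gt1, s2_lt]
  · -- image of Ioi oK
    refine image_abcd (-(2+2*Real.sqrt 2)) (-1) (-1) 0 hδ ?_ ?_ ?_
    · intro u hu; simp only [mem_Ioi, mem_Ioo, oK] at hu ⊢
      constructor
      · rw [lt_div_iff_of_neg (by nlinarith [s2_sq, s2_gt1, s2_lt])]
        nlinarith [s2_sq, s2_gt1, s2_lt]
      · rw [div_lt_iff_of_neg (by nlinarith [s2_sq, s2_gt1, s2_lt])]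
        nlinarith [s2_sq, s2_gt1, s2_lt]
    · intro y hy; simp only [mem_Ioo, oK] at hy; intro h; nlinarith [s2_sq, s2_gt1, s2_lt]
    · intro y hy; simp only [mem_Ioo, mem_Ioi, oK] at hy ⊢
      rw [lt_div_iff₀ (by nlinarith [s2_sq, s2_gt1, s2_lt])]
      nlinarith [s2_sq, s2_gt1, s2_lt]


lemma pieceCov5 (φ : ℝ × ℝ → ℝ≥0∞) (hφ : Measurable φ) :
    ∫⁻ p in (Ioo (-1) (1-Real.sqrt 2)) ×ˢ Ioi oK,
        φ (mob (gam * nu 5) p.1, mob (gam * nu 5) p.2) *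
          ENNReal.ofReal (((p.1-p.2)^2)⁻¹)
    = ∫⁻ p in (Iio oK) ×ˢ (Ioo (1+3*Real.sqrt 2) (3+2*Real.sqrt 2)), φ p * ENNReal.ofReal (((p.1-p.2)^2)⁻¹) := by
  have hδ : (3+2*Real.sqrt 2)*1 - (1+2*Real.sqrt 2)*1 ≠ 0 := by nlinarith [s2_sq, s2_gt1, s2_lt]
  simp only [mob5]
  refine piece_cov (3+2*Real.sqrt 2) (1+2*Real.sqrt 2) 1 1 hδ measurableSet_Ioo ?_ ?_ ?_ ?_ ?_ ?_ φ hφ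
  · -- I ⊆ Iio oK
    intro u hu; simp only [mem_Ioo, mem_Iio, oK] at hu ⊢; nlinarith [s2_sq, s2_gt1, s2_lt]
  · -- J ⊆ Ioi oK
    intro y hy; simp only [mem_Ioo, mem_Ioi, oK] at hy ⊢; nlinarith [s2_sq, s2_gt1, s2_lt]
  · -- den on I
    intro u hu; simp only [mem_Ioo, oK] at hu; intro h; nlinarith [s2_sq, s2_gt1, s2_lt]
  · -- den on Ioi oK
    intro v hv; simp only [mem_Ioi, oK] at hv; intro h; nlinarith [s2_sq, s2_gt1, s2_lt]
  · -- image of I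
    refine image_abcd (3+2*Real.sqrt 2) (1+2*Real.sqrt 2) 1 1 hδ ?_ ?_ ?_
    · intro u hu; simp only [mem_Ioo, mem_Iio, oK] at hu ⊢
      rw [div_lt_iff₀ (by nlinarith [s2_sq, s2_gt1, s2_lt])]
      nlinarith [s2_sq, s2_gt1, s2_lt]
    · intro y hy; simp only [mem_Iio, oK] at hy; intro h; nlinarith [s2_sq, s2_gt1, s2_lt]
    · intro y hy; simp only [mem_Iio, mem_Ioo, oK] at hy ⊢
      constructor
      · rw [lt_div_iff₀ (by nlinarith [s2_sq, s2_gt1, s2_lt])]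
        nlinarith [s2_sq, s2_gt1, s2_lt]
      · rw [div_lt_iff₀ (by nlinarith [s2_sq, s2_gt1, s2_lt])]
        nlinarith [s2_sq, s2_gt1, s2_lt]
  · -- image of Ioi oK
    refine image_abcd (3+2*Real.sqrt 2) (1+2*Real.sqrt 2) 1 1 hδ ?_ ?_ ?_
    · intro u hu; simp only [mem_Ioi, mem_Ioo, oK] at hu ⊢
      constructor
      · rw [lt_div_iff₀ (by nlinarith [s2_sq, s2_gt1, s2_lt])]
        nlinarith [s2_sq, s2_gt1, s2_lt]
      · rw [div_lt_iff₀ (by nlinarith [s2_sq, s2_gt1, s2_lt])]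
        nlinarith [s2_sq, s2_gt1, s2_lt]
    · intro y hy; simp only [mem_Ioo, oK] at hy; intro h; nlinarith [s2_sq, s2_gt1, s2_lt]
    · intro y hy; simp only [mem_Ioo, mem_Ioi, oK] at hy ⊢
      rw [lt_div_iff₀ (by nlinarith [s2_sq, s2_gt1, s2_lt])]
      nlinarith [s2_sq, s2_gt1, s2_lt]


lemma pieceCov6 (φ : ℝ × ℝ → ℝ≥0∞) (hφ : Measurable φ) :
    ∫⁻ p in (Ioo (-(1+Real.sqrt 2)) (-1)) ×ˢ Ioi oK,
        φ (mob (gam * nu 6) p.1, mob (gam * nu 6) p.2) *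
          ENNReal.ofReal (((p.1-p.2)^2)⁻¹)
    = ∫⁻ p in (Iio oK) ×ˢ (Ioo (1+2*Real.sqrt 2) (3+Real.sqrt 2)), φ p * ENNReal.ofReal (((p.1-p.2)^2)⁻¹) := by
  have hδ : (-(1+2*Real.sqrt 2))*(-1) - (-(3+2*Real.sqrt 2))*(-1) ≠ 0 := by nlinarith [s2_sq, s2_gt1, s2_lt]
  simp only [mob6]
  refine piece_cov (-(1+2*Real.sqrt 2)) (-(3+2*Real.sqrt 2)) (-1) (-1) hδ measurableSet_Ioo ?_ ?_ ?_ ?_ ?_ ?_ φ hφ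
  · -- I ⊆ Iio oK
    intro u hu; simp only [mem_Ioo, mem_Iio, oK] at hu ⊢; nlinarith [s2_sq, s2_gt1, s2_lt]
  · -- J ⊆ Ioi oK
    intro y hy; simp only [mem_Ioo, mem_Ioi, oK] at hy ⊢; nlinarith [s2_sq, s2_gt1, s2_lt]
  · -- den on I
    intro u hu; simp only [mem_Ioo, oK] at hu; intro h; nlinarith [s2_sq, s2_gt1, s2_lt]
  · -- den on Ioi oK
    intro v hv; simp only [mem_Ioi, oK] at hv; intro h; nlinarith [s2_sq, s2_gt1, s2_lt]
  · -- image of I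
    refine image_abcd (-(1+2*Real.sqrt 2)) (-(3+2*Real.sqrt 2)) (-1) (-1) hδ ?_ ?_ ?_
    · intro u hu; simp only [mem_Ioo, mem_Iio, oK] at hu ⊢
      rw [div_lt_iff₀ (by nlinarith [s2_sq, s2_gt1, s2_lt])]
      nlinarith [s2_sq, s2_gt1, s2_lt]
    · intro y hy; simp only [mem_Iio, oK] at hy; intro h; nlinarith [s2_sq, s2_gt1, s2_lt]
    · intro y hy; simp only [mem_Iio, mem_Ioo, oK] at hy ⊢
      constructor
      · rw [lt_div_iff_of_neg (by nlinarith [s2_sq, s2_gt1, s2_lt])]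
        nlinarith [s2_sq, s2_gt1, s2_lt]
      · rw [div_lt_iff_of_neg (by nlinarith [s2_sq, s2_gt1, s2_lt])]
        nlinarith [s2_sq, s2_gt1, s2_lt]
  · -- image of Ioi oK
    refine image_abcd (-(1+2*Real.sqrt 2)) (-(3+2*Real.sqrt 2)) (-1) (-1) hδ ?_ ?_ ?_
    · intro u hu; simp only [mem_Ioi, mem_Ioo, oK] at hu ⊢
      constructor
      · rw [lt_div_iff_of_neg (by nlinarith [s2_sq, s2_gt1, s2_lt])]
        nlinarith [s2_sq, s2_gt1, s2_lt]
      · rw [div_lt_iff_of_neg (by nlinarith [s2_sq, s2_gt1, s2_lt])]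
        nlinarith [s2_sq, s2_gt1, s2_lt]
    · intro y hy; simp only [mem_Ioo, oK] at hy; intro h; nlinarith [s2_sq, s2_gt1, s2_lt]
    · intro y hy; simp only [mem_Ioo, mem_Ioi, oK] at hy ⊢
      rw [lt_div_iff₀ (by nlinarith [s2_sq, s2_gt1, s2_lt])]
      nlinarith [s2_sq, s2_gt1, s2_lt]


lemma pieceCov7 (φ : ℝ × ℝ → ℝ≥0∞) (hφ : Measurable φ) :
    ∫⁻ p in (Iio (-(1+Real.sqrt 2))) ×ˢ Ioi oK,
        φ (mob (gam * nu 7) p.1, mob (gam * nu 7) p.2) *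
          ENNReal.ofReal (((p.1-p.2)^2)⁻¹)
    = ∫⁻ p in (Iio oK) ×ˢ (Ioi (3+3*Real.sqrt 2)), φ p * ENNReal.ofReal (((p.1-p.2)^2)⁻¹) := by
  have hδ : (1:ℝ)*1 - (2+2*Real.sqrt 2)*0 ≠ 0 := by norm_num
  simp only [mob7]
  refine piece_cov 1 (2+2*Real.sqrt 2) 0 1 hδ measurableSet_Iio ?_ ?_ ?_ ?_ ?_ ?_ φ hφ
  · intro u hu; simp only [mem_Iio, oK] at hu ⊢; nlinarith [s2_sq, s2_gt1, s2_lt]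
  · intro y hy; simp only [mem_Ioi, oK] at hy ⊢; nlinarith [s2_sq, s2_gt1, s2_lt]
  · intro u _; norm_num
  · intro v _; norm_num
  · refine image_abcd 1 (2+2*Real.sqrt 2) 0 1 hδ ?_ ?_ ?_
    · intro u hu; simp only [mem_Iio, oK] at hu ⊢
      rw [show (0:ℝ)*u + 1 = 1 by ring, div_one]; nlinarith [s2_sq, s2_gt1, s2_lt]
    · intro y _; norm_num
    · intro y hy; simp only [mem_Iio, oK] at hy ⊢
      rw [show (1:ℝ) - 0*y = 1 by ring, div_one]; nlinarith [s2_sq, s2_gt1, s2_lt]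
  · refine image_abcd 1 (2+2*Real.sqrt 2) 0 1 hδ ?_ ?_ ?_
    · intro u hu; simp only [mem_Ioi, oK] at hu ⊢
      rw [show (0:ℝ)*u + 1 = 1 by ring, div_one]; nlinarith [s2_sq, s2_gt1, s2_lt]
    · intro y _; norm_num
    · intro y hy; simp only [mem_Ioi, oK] at hy ⊢
      rw [show (1:ℝ) - 0*y = 1 by ring, div_one]; nlinarith [s2_sq, s2_gt1, s2_lt]


lemma oK_gt1 : (1:ℝ) < oK := by simp only [oK]; linarith [s2_gt1]

lemma sector1 {u : ℝ} (h : u ∈ Ioo 1 oK) : sectorIndex u = 1 := by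
  obtain ⟨h1, h2⟩ := h; simp only [oK] at h2
  simp only [sectorIndex]; rw [if_neg (by linarith), if_pos h1]
lemma sector2 {u : ℝ} (h : u ∈ Ioc (Real.sqrt 2 - 1) 1) : sectorIndex u = 2 := by
  obtain ⟨h1, h2⟩ := h; have := s2_gt1
  simp only [sectorIndex]; rw [if_neg (by linarith), if_neg (by linarith), if_pos h1]
lemma sector3 {u : ℝ} (h : u ∈ Ioc 0 (Real.sqrt 2 - 1)) : sectorIndex u = 3 := by
  obtain ⟨h1, h2⟩ := h; have := s2_gt1; have := s2_lt
  simp only [sectorIndex]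
  rw [if_neg (by linarith), if_neg (by linarith), if_neg (by linarith), if_pos h1]
lemma sector4 {u : ℝ} (h : u ∈ Ioc (1 - Real.sqrt 2) 0) : sectorIndex u = 4 := by
  obtain ⟨h1, h2⟩ := h; have := s2_gt1; have := s2_lt
  simp only [sectorIndex]
  rw [if_neg (by linarith), if_neg (by linarith), if_neg (by linarith),
    if_neg (by linarith), if_pos h1]
lemma sector5 {u : ℝ} (h : u ∈ Ioc (-1) (1 - Real.sqrt 2)) : sectorIndex u = 5 := by
  obtain ⟨h1, h2⟩ := h; have := s2_gt1; have := s2_lt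
  simp only [sectorIndex]
  rw [if_neg (by linarith), if_neg (by linarith), if_neg (by linarith),
    if_neg (by linarith), if_neg (by linarith), if_pos h1]
lemma sector6 {u : ℝ} (h : u ∈ Ioc (-(1 + Real.sqrt 2)) (-1)) : sectorIndex u = 6 := by
  obtain ⟨h1, h2⟩ := h; have := s2_gt1; have := s2_lt
  simp only [sectorIndex]
  rw [if_neg (by linarith), if_neg (by linarith), if_neg (by linarith),
    if_neg (by linarith), if_neg (by linarith), if_neg (by linarith), if_pos h1]
lemma sector7 {u : ℝ} (h : u ∈ Iic (-(1 + Real.sqrt 2))) : sectorIndex u = 7 := by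
  simp only [mem_Iic] at h; have := s2_gt1; have := s2_lt
  simp only [sectorIndex]
  rw [if_neg (by linarith), if_neg (by linarith), if_neg (by linarith),
    if_neg (by linarith), if_neg (by linarith), if_neg (by linarith), if_neg (by linarith)]

lemma Fhat_on {p : ℝ × ℝ} {i : ℕ} (hsec : sectorIndex p.1 = i) (hi : i ≠ 0) :
    Fhat p = (mob (gam * nu i) p.1, mob (gam * nu i) p.2) := by
  simp only [Fhat, hsec, hi, if_false, if_neg hi]

def FhatAux : ℝ × ℝ → ℝ × ℝ := fun p =>
  if 1 + Real.sqrt 2 < p.1 then p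
  else if 1 < p.1 then (mob (gam * nu 1) p.1, mob (gam * nu 1) p.2)
  else if Real.sqrt 2 - 1 < p.1 then (mob (gam * nu 2) p.1, mob (gam * nu 2) p.2)
  else if 0 < p.1 then (mob (gam * nu 3) p.1, mob (gam * nu 3) p.2)
  else if 1 - Real.sqrt 2 < p.1 then (mob (gam * nu 4) p.1, mob (gam * nu 4) p.2)
  else if -1 < p.1 then (mob (gam * nu 5) p.1, mob (gam * nu 5) p.2)
  else if -(1 + Real.sqrt 2) < p.1 then (mob (gam * nu 6) p.1, mob (gam * nu 6) p.2)
  else (mob (gam * nu 7) p.1, mob (gam * nu 7) p.2)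

lemma Fhat_eq_aux : Fhat = FhatAux := by
  funext p
  simp only [Fhat, FhatAux, sectorIndex]
  split_ifs <;> simp_all

lemma meas_mob (M : Matrix (Fin 2) (Fin 2) ℝ) : Measurable (mob M) := by
  unfold mob; apply Measurable.div <;> fun_prop

lemma measurable_Fhat : Measurable Fhat := by
  rw [Fhat_eq_aux]
  unfold FhatAux
  have hb : ∀ i : ℕ, Measurable fun p : ℝ × ℝ =>
      (mob (gam * nu i) p.1, mob (gam * nu i) p.2) := fun i =>
    ((meas_mob _).comp measurable_fst).prodMk ((meas_mob _).comp measurable_snd)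
  have hc : ∀ r : ℝ, MeasurableSet {p : ℝ × ℝ | r < p.1} :=
    fun r => measurableSet_lt measurable_const measurable_fst
  exact Measurable.ite (hc _) measurable_id <| Measurable.ite (hc _) (hb 1) <|
    Measurable.ite (hc _) (hb 2) <| Measurable.ite (hc _) (hb 3) <|
    Measurable.ite (hc _) (hb 4) <| Measurable.ite (hc _) (hb 5) <|
    Measurable.ite (hc _) (hb 6) (hb 7)

lemma lint_congr_prod_left {A B C : Set ℝ} (hBA : B ⊆ A) (hn : volume (A \ B) = 0)
    (H : ℝ × ℝ → ℝ≥0∞) : ∫⁻ p in A ×ˢ C, H p = ∫⁻ p in B ×ˢ C, H p := by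
  apply setLIntegral_congr
  refine (MeasureTheory.ae_eq_set).2 ⟨?_, ?_⟩
  · apply measure_mono_null (t := (A \ B) ×ˢ C)
    · rintro ⟨x, y⟩ ⟨⟨hx, hy⟩, hn2⟩
      exact ⟨⟨hx, fun hxB => hn2 ⟨hxB, hy⟩⟩, hy⟩
    · rw [MeasureTheory.Measure.volume_eq_prod, Measure.prod_prod, hn, zero_mul]
  · rw [Set.diff_eq_empty.2 (Set.prod_mono_left hBA)]; exact measure_empty

lemma lint_congr_prod_right {A B C : Set ℝ} (hBA : B ⊆ A) (hn : volume (A \ B) = 0)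
    (H : ℝ × ℝ → ℝ≥0∞) : ∫⁻ p in C ×ˢ A, H p = ∫⁻ p in C ×ˢ B, H p := by
  apply setLIntegral_congr
  refine (MeasureTheory.ae_eq_set).2 ⟨?_, ?_⟩
  · apply measure_mono_null (t := C ×ˢ (A \ B))
    · rintro ⟨x, y⟩ ⟨⟨hx, hy⟩, hn2⟩
      exact ⟨hx, ⟨hy, fun hyB => hn2 ⟨hx, hyB⟩⟩⟩
    · rw [MeasureTheory.Measure.volume_eq_prod, Measure.prod_prod, hn, mul_zero]
  · rw [Set.diff_eq_empty.2 (Set.prod_mono_right hBA)]; exact measure_empty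

lemma vol_Ioc_diff_Ioo (a b : ℝ) : volume (Ioc a b \ Ioo a b) = 0 := by
  apply measure_mono_null (t := {b}) _ Real.volume_singleton
  intro x hx
  obtain ⟨⟨h1, h2⟩, h3⟩ := hx
  simp only [mem_singleton_iff]
  by_contra hne
  exact h3 ⟨h1, lt_of_le_of_ne h2 hne⟩

lemma vol_Iic_diff_Iio (a : ℝ) : volume (Iic a \ Iio a) = 0 := by
  apply measure_mono_null (t := {a}) _ Real.volume_singleton
  intro x hx
  obtain ⟨h1, h2⟩ := hx
  simp only [mem_Iio, not_lt] at h2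
  simp only [mem_singleton_iff]
  exact le_antisymm h1 h2

lemma lint_split_left {A B C U : Set ℝ} (H : ℝ × ℝ → ℝ≥0∞) (hU : U = A ∪ B)
    (hd : Disjoint A B) (hB : MeasurableSet B) (hC : MeasurableSet C) :
    ∫⁻ p in U ×ˢ C, H p = (∫⁻ p in A ×ˢ C, H p) + ∫⁻ p in B ×ˢ C, H p := by
  rw [hU, Set.union_prod]
  exact lintegral_union (hB.prod hC) (Set.Disjoint.set_prod_left hd _ _)

lemma lint_split_right {A B C U : Set ℝ} (H : ℝ × ℝ → ℝ≥0∞) (hU : U = A ∪ B)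
    (hd : Disjoint A B) (hB : MeasurableSet B) (hC : MeasurableSet C) :
    ∫⁻ p in C ×ˢ U, H p = (∫⁻ p in C ×ˢ A, H p) + ∫⁻ p in C ×ˢ B, H p := by
  rw [hU, Set.prod_union]
  exact lintegral_union (hC.prod hB) (Set.Disjoint.set_prod_right hd _ _)

lemma Iic_union_Ioo_eq_Iio' {a b : ℝ} (h : a < b) : Iic a ∪ Ioo a b = Iio b := by
  ext x
  simp only [mem_union, mem_Iic, mem_Ioo, mem_Iio]
  constructor
  · rintro (h1 | ⟨_, h2⟩)
    · exact lt_of_le_of_lt h1 h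
    · exact h2
  · intro h1
    rcases le_or_gt x a with h2 | h2
    · exact Or.inl h2
    · exact Or.inr ⟨h2, h1⟩

lemma measure_eq (E : Set (ℝ × ℝ)) (hE : MeasurableSet E) :
    fareyMeasureHat E = ∫⁻ p in (Iio oK) ×ˢ (Ioi oK),
      E.indicator (fun _ => (1:ℝ≥0∞)) p * ENNReal.ofReal ((p.1 - p.2)^2)⁻¹ := by
  rw [fareyMeasureHat, withDensity_apply _ hE, ← lintegral_indicator hE]
  have : ∀ p : ℝ × ℝ,
      E.indicator ((Set.Iio (1 + Real.sqrt 2) ×ˢ Set.Ioi (1 + Real.sqrt 2)).indicator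
        fun q => ENNReal.ofReal ((q.1 - q.2)^2)⁻¹) p
      = (Iio oK ×ˢ Ioi oK).indicator
          (fun q => E.indicator (fun _ => (1:ℝ≥0∞)) q * ENNReal.ofReal ((q.1 - q.2)^2)⁻¹) p := by
    intro p
    have hoK : (Set.Iio (1 + Real.sqrt 2) ×ˢ Set.Ioi (1 + Real.sqrt 2)) = Iio oK ×ˢ Ioi oK := rfl
    rw [hoK]
    by_cases h1 : p ∈ E <;> by_cases h2 : p ∈ (Iio oK ×ˢ Ioi oK) <;>
      simp [Set.indicator_apply, h1, h2]
  rw [lintegral_congr this, lintegral_indicator (measurableSet_Iio.prod measurableSet_Ioi)]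

/-- The measure with density `1/(u-v)²` on `Σ × Σ₀` is invariant under the natural
extension `F̂` of the octagon Farey map. -/
theorem fareyMeasureHat_invariant (D : Set (ℝ × ℝ)) (hD : MeasurableSet D) :
    fareyMeasureHat (Fhat ⁻¹' D) = fareyMeasureHat D := by
  have hFm : Measurable Fhat := measurable_Fhat
  have hφ : Measurable (D.indicator fun _ => (1:ℝ≥0∞)) := measurable_const.indicator hD
  have h1 := s2_gt1
  have h2 := s2_lt
  rw [measure_eq _ (hFm hD), measure_eq _ hD]
  have hcomp : ∀ p : ℝ × ℝ, (Fhat ⁻¹' D).indicator (fun _ => (1:ℝ≥0∞)) p *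
        ENNReal.ofReal ((p.1 - p.2)^2)⁻¹
      = D.indicator (fun _ => (1:ℝ≥0∞)) (Fhat p) * ENNReal.ofReal ((p.1 - p.2)^2)⁻¹ := by
    intro p
    by_cases h : Fhat p ∈ D <;> simp [Set.indicator_apply, Set.mem_preimage, h]
  rw [lintegral_congr fun p => hcomp p]
  have hdIicIoc : ∀ a b : ℝ, Disjoint (Iic a) (Ioc a b) := fun a b =>
    Set.disjoint_left.2 fun x hx hx' => absurd hx'.1 (not_lt.2 hx)
  have hdIicIoo : ∀ a b : ℝ, Disjoint (Iic a) (Ioo a b) := fun a b =>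
    Set.disjoint_left.2 fun x hx hx' => absurd hx'.1 (not_lt.2 hx)
  have hdIocIoi : ∀ a b : ℝ, Disjoint (Ioc a b) (Ioi b) := fun a b =>
    Set.disjoint_left.2 fun x hx hx' => absurd hx' (not_lt.2 hx.2)
  rw [lint_split_left _
      (show Iio oK = Iic 1 ∪ Ioo 1 oK from (Iic_union_Ioo_eq_Iio' oK_gt1).symm)
      (hdIicIoo 1 oK) measurableSet_Ioo measurableSet_Ioi,
    lint_split_left _
      (show Iic (1:ℝ) = Iic (Real.sqrt 2 - 1) ∪ Ioc (Real.sqrt 2 - 1) 1 from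
        (Iic_union_Ioc_eq_Iic (by linarith)).symm)
      (hdIicIoc _ _) measurableSet_Ioc measurableSet_Ioi,
    lint_split_left _
      (show Iic (Real.sqrt 2 - 1) = Iic 0 ∪ Ioc 0 (Real.sqrt 2 - 1) from
        (Iic_union_Ioc_eq_Iic (by linarith)).symm)
      (hdIicIoc _ _) measurableSet_Ioc measurableSet_Ioi,
    lint_split_left _
      (show Iic (0:ℝ) = Iic (1 - Real.sqrt 2) ∪ Ioc (1 - Real.sqrt 2) 0 from
        (Iic_union_Ioc_eq_Iic (by linarith)).symm)
      (hdIicIoc _ _) measurableSet_Ioc measurableSet_Ioi,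
    lint_split_left _
      (show Iic (1 - Real.sqrt 2) = Iic (-1) ∪ Ioc (-1) (1 - Real.sqrt 2) from
        (Iic_union_Ioc_eq_Iic (by linarith)).symm)
      (hdIicIoc _ _) measurableSet_Ioc measurableSet_Ioi,
    lint_split_left _
      (show Iic (-1:ℝ) = Iic (-(1 + Real.sqrt 2)) ∪ Ioc (-(1 + Real.sqrt 2)) (-1) from
        (Iic_union_Ioc_eq_Iic (by linarith)).symm)
      (hdIicIoc _ _) measurableSet_Ioc measurableSet_Ioi]
  have e1 : ∫⁻ p in (Ioo 1 oK) ×ˢ Ioi oK,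
        D.indicator (fun _ => (1:ℝ≥0∞)) (Fhat p) * ENNReal.ofReal ((p.1 - p.2)^2)⁻¹
      = ∫⁻ p in (Iio oK) ×ˢ (Ioc oK (1+2*Real.sqrt 2)),
        D.indicator (fun _ => (1:ℝ≥0∞)) p * ENNReal.ofReal ((p.1 - p.2)^2)⁻¹ := by
    rw [setLIntegral_congr_fun (measurableSet_Ioo.prod measurableSet_Ioi)
        (fun p hp => by rw [Fhat_on (sector1 hp.1) (by norm_num)]),
      pieceCov1 _ hφ,
      ← lint_congr_prod_right Ioo_subset_Ioc_self (vol_Ioc_diff_Ioo _ _)]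
  have e2 : ∫⁻ p in (Ioc (Real.sqrt 2 - 1) 1) ×ˢ Ioi oK,
        D.indicator (fun _ => (1:ℝ≥0∞)) (Fhat p) * ENNReal.ofReal ((p.1 - p.2)^2)⁻¹
      = ∫⁻ p in (Iio oK) ×ˢ (Ioc (3+2*Real.sqrt 2) (3+3*Real.sqrt 2)),
        D.indicator (fun _ => (1:ℝ≥0∞)) p * ENNReal.ofReal ((p.1 - p.2)^2)⁻¹ := by
    rw [setLIntegral_congr_fun (measurableSet_Ioc.prod measurableSet_Ioi)
        (fun p hp => by rw [Fhat_on (sector2 hp.1) (by norm_num)]),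
      lint_congr_prod_left Ioo_subset_Ioc_self (vol_Ioc_diff_Ioo _ _),
      pieceCov2 _ hφ,
      ← lint_congr_prod_right Ioo_subset_Ioc_self (vol_Ioc_diff_Ioo _ _)]
  have e3 : ∫⁻ p in (Ioc 0 (Real.sqrt 2 - 1)) ×ˢ Ioi oK,
        D.indicator (fun _ => (1:ℝ≥0∞)) (Fhat p) * ENNReal.ofReal ((p.1 - p.2)^2)⁻¹
      = ∫⁻ p in (Iio oK) ×ˢ (Ioc (3+Real.sqrt 2) (2+2*Real.sqrt 2)),
        D.indicator (fun _ => (1:ℝ≥0∞)) p * ENNReal.ofReal ((p.1 - p.2)^2)⁻¹ := by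
    rw [setLIntegral_congr_fun (measurableSet_Ioc.prod measurableSet_Ioi)
        (fun p hp => by rw [Fhat_on (sector3 hp.1) (by norm_num)]),
      lint_congr_prod_left Ioo_subset_Ioc_self (vol_Ioc_diff_Ioo _ _),
      pieceCov3 _ hφ,
      ← lint_congr_prod_right Ioo_subset_Ioc_self (vol_Ioc_diff_Ioo _ _)]
  have e4 : ∫⁻ p in (Ioc (1 - Real.sqrt 2) 0) ×ˢ Ioi oK,
        D.indicator (fun _ => (1:ℝ≥0∞)) (Fhat p) * ENNReal.ofReal ((p.1 - p.2)^2)⁻¹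
      = ∫⁻ p in (Iio oK) ×ˢ (Ioc (2+2*Real.sqrt 2) (1+3*Real.sqrt 2)),
        D.indicator (fun _ => (1:ℝ≥0∞)) p * ENNReal.ofReal ((p.1 - p.2)^2)⁻¹ := by
    rw [setLIntegral_congr_fun (measurableSet_Ioc.prod measurableSet_Ioi)
        (fun p hp => by rw [Fhat_on (sector4 hp.1) (by norm_num)]),
      lint_congr_prod_left Ioo_subset_Ioc_self (vol_Ioc_diff_Ioo _ _),
      pieceCov4 _ hφ,
      ← lint_congr_prod_right Ioo_subset_Ioc_self (vol_Ioc_diff_Ioo _ _)]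
  have e5 : ∫⁻ p in (Ioc (-1) (1 - Real.sqrt 2)) ×ˢ Ioi oK,
        D.indicator (fun _ => (1:ℝ≥0∞)) (Fhat p) * ENNReal.ofReal ((p.1 - p.2)^2)⁻¹
      = ∫⁻ p in (Iio oK) ×ˢ (Ioc (1+3*Real.sqrt 2) (3+2*Real.sqrt 2)),
        D.indicator (fun _ => (1:ℝ≥0∞)) p * ENNReal.ofReal ((p.1 - p.2)^2)⁻¹ := by
    rw [setLIntegral_congr_fun (measurableSet_Ioc.prod measurableSet_Ioi)
        (fun p hp => by rw [Fhat_on (sector5 hp.1) (by norm_num)]),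
      lint_congr_prod_left Ioo_subset_Ioc_self (vol_Ioc_diff_Ioo _ _),
      pieceCov5 _ hφ,
      ← lint_congr_prod_right Ioo_subset_Ioc_self (vol_Ioc_diff_Ioo _ _)]
  have e6 : ∫⁻ p in (Ioc (-(1 + Real.sqrt 2)) (-1)) ×ˢ Ioi oK,
        D.indicator (fun _ => (1:ℝ≥0∞)) (Fhat p) * ENNReal.ofReal ((p.1 - p.2)^2)⁻¹
      = ∫⁻ p in (Iio oK) ×ˢ (Ioc (1+2*Real.sqrt 2) (3+Real.sqrt 2)),
        D.indicator (fun _ => (1:ℝ≥0∞)) p * ENNReal.ofReal ((p.1 - p.2)^2)⁻¹ := by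
    rw [setLIntegral_congr_fun (measurableSet_Ioc.prod measurableSet_Ioi)
        (fun p hp => by rw [Fhat_on (sector6 hp.1) (by norm_num)]),
      lint_congr_prod_left Ioo_subset_Ioc_self (vol_Ioc_diff_Ioo _ _),
      pieceCov6 _ hφ,
      ← lint_congr_prod_right Ioo_subset_Ioc_self (vol_Ioc_diff_Ioo _ _)]
  have e7 : ∫⁻ p in (Iic (-(1 + Real.sqrt 2))) ×ˢ Ioi oK,
        D.indicator (fun _ => (1:ℝ≥0∞)) (Fhat p) * ENNReal.ofReal ((p.1 - p.2)^2)⁻¹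
      = ∫⁻ p in (Iio oK) ×ˢ (Ioi (3+3*Real.sqrt 2)),
        D.indicator (fun _ => (1:ℝ≥0∞)) p * ENNReal.ofReal ((p.1 - p.2)^2)⁻¹ := by
    rw [setLIntegral_congr_fun (measurableSet_Iic.prod measurableSet_Ioi)
        (fun p hp => by rw [Fhat_on (sector7 hp.1) (by norm_num)]),
      lint_congr_prod_left Iio_subset_Iic_self (vol_Iic_diff_Iio _),
      pieceCov7 _ hφ]
  rw [e1, e2, e3, e4, e5, e6, e7]
  rw [lint_split_right _
      (show Ioi oK = Ioc oK (1+2*Real.sqrt 2) ∪ Ioi (1+2*Real.sqrt 2) from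
        (Ioc_union_Ioi_eq_Ioi (by simp only [oK]; linarith)).symm)
      (hdIocIoi _ _) measurableSet_Ioi measurableSet_Iio,
    lint_split_right _
      (show Ioi (1+2*Real.sqrt 2) = Ioc (1+2*Real.sqrt 2) (3+Real.sqrt 2) ∪ Ioi (3+Real.sqrt 2) from
        (Ioc_union_Ioi_eq_Ioi (by linarith)).symm)
      (hdIocIoi _ _) measurableSet_Ioi measurableSet_Iio,
    lint_split_right _
      (show Ioi (3+Real.sqrt 2) = Ioc (3+Real.sqrt 2) (2+2*Real.sqrt 2) ∪ Ioi (2+2*Real.sqrt 2) from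
        (Ioc_union_Ioi_eq_Ioi (by linarith)).symm)
      (hdIocIoi _ _) measurableSet_Ioi measurableSet_Iio,
    lint_split_right _
      (show Ioi (2+2*Real.sqrt 2) = Ioc (2+2*Real.sqrt 2) (1+3*Real.sqrt 2) ∪ Ioi (1+3*Real.sqrt 2) from
        (Ioc_union_Ioi_eq_Ioi (by linarith)).symm)
      (hdIocIoi _ _) measurableSet_Ioi measurableSet_Iio,
    lint_split_right _
      (show Ioi (1+3*Real.sqrt 2) = Ioc (1+3*Real.sqrt 2) (3+2*Real.sqrt 2) ∪ Ioi (3+2*Real.sqrt 2) from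
        (Ioc_union_Ioi_eq_Ioi (by linarith)).symm)
      (hdIocIoi _ _) measurableSet_Ioi measurableSet_Iio,
    lint_split_right _
      (show Ioi (3+2*Real.sqrt 2) = Ioc (3+2*Real.sqrt 2) (3+3*Real.sqrt 2) ∪ Ioi (3+3*Real.sqrt 2) from
        (Ioc_union_Ioi_eq_Ioi (by linarith)).symm)
      (hdIocIoi _ _) measurableSet_Ioi measurableSet_Iio]
  ring
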